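/- Let q = 4 and n = 1 + 2q + 2q^{e−1} + 2q^{e+1} with e > 1 an integer. Then g_{n,q} ≡ S_2 + X²S_e² + S_{e−1}²S_e² (mod X^{q^e} − X). If e is odd, then g_{n,q} is a permutation polynomial of F_{q^e}. -/

import Mathlib

open Polynomial Finset

private lemma aux_char2 {E : Type*} [Field E] [Fintype E] {e : ℕ}
    (hE : Fintype.card E = 4 ^ e) : CharP E 2 := by
  have hp : (ringChar E).Prime := CharP.char_is_prime E (ringChar E)
  obtain ⟨m, -, hcard⟩ := FiniteField.card E (ringChar E)
  have h2 : ringChar E = 2 := by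
    have hdvd : ringChar E ∣ 2 ^ (2 * e) := by
      have h1 : ringChar E ∣ Fintype.card E := by
        rw [hcard]; exact dvd_pow_self _ (by exact_mod_cast m.ne_zero)
      have h2 : Fintype.card E = 2 ^ (2 * e) := by rw [hE, pow_mul]; norm_num
      rwa [h2] at h1
    have := hp.dvd_of_dvd_pow hdvd
    exact (Nat.prime_dvd_prime_iff_eq hp Nat.prime_two).mp this
  rw [← h2]; exact ringChar.charP E

private lemma aux_pow4 {K : Type*} [Monoid K] {a : K} (ha : a ^ 4 = a) :
    ∀ k : ℕ, a ^ 4 ^ k = a := by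
  intro k
  induction k with
  | zero => simp
  | succ k ih => rw [pow_succ, pow_mul, ih, ha]

private lemma aux_sum1 {K : Type*} [Field K] [Fintype K] (h : Fintype.card K = 4) :
    ∑ c : K, c = 0 := by
  have := FiniteField.sum_pow_lt_card_sub_one K 1 (by rw [h]; omega)
  simpa using this

private lemma aux_sum2 {K : Type*} [Field K] [Fintype K] (h : Fintype.card K = 4) :
    ∑ c : K, c ^ 2 = 0 :=
  FiniteField.sum_pow_lt_card_sub_one K 2 (by rw [h]; omega)

private lemma aux_sum3 {K : Type*} [Field K] [Fintype K] (h : Fintype.card K = 4) :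
    ∑ c : K, c ^ 3 = 1 + 1 + 1 := by
  classical
  have key : ∀ c : K, c ≠ 0 → c ^ 3 = 1 := by
    intro c hc
    have := FiniteField.pow_card_sub_one_eq_one c hc
    rwa [h] at this
  rw [← Finset.sum_erase_add _ _ (Finset.mem_univ (0 : K))]
  rw [Finset.sum_congr rfl (fun c hc => key c (Finset.ne_of_mem_erase hc))]
  rw [Finset.sum_const, Finset.card_erase_of_mem (Finset.mem_univ _), Finset.card_univ, h]
  push_cast
  ring

/-- the `F4`-trace-like map. -/
private noncomputable def trE {E : Type*} [Field E] (m : ℕ) (x : E) : E :=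
  ∑ i ∈ Finset.range (m + 1), x ^ 4 ^ i

section trE

variable {E : Type*} [Field E] {m : ℕ}

private lemma trE_add [CharP E 2] (x y : E) : trE m (x + y) = trE m x + trE m y := by
  unfold trE
  rw [← Finset.sum_add_distrib]
  refine Finset.sum_congr rfl fun i _ => ?_
  have h4i : (4 : ℕ) ^ i = 2 ^ (2 * i) := by rw [pow_mul]; norm_num
  rw [h4i, add_pow_char_pow]

private lemma trE_sq [CharP E 2] (x : E) : trE m (x ^ 2) = trE m x ^ 2 := by
  unfold trE
  rw [CharTwo.sum_sq]
  refine Finset.sum_congr rfl fun i _ => ?_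
  ring

private lemma trE_mul {c : E} (hc : c ^ 4 = c) (x : E) : trE m (c * x) = c * trE m x := by
  unfold trE
  rw [Finset.mul_sum]
  refine Finset.sum_congr rfl fun i _ => ?_
  rw [mul_pow, aux_pow4 hc]

private lemma trE_shift (hcard : ∀ x : E, x ^ 4 ^ (m + 1) = x) (x : E) :
    trE m (x ^ 4) = trE m x := by
  unfold trE
  have hterm : ∀ i : ℕ, (x ^ 4) ^ 4 ^ i = x ^ 4 ^ (i + 1) := by
    intro i; rw [← pow_mul]; congr 1; rw [pow_succ]; ring
  rw [Finset.sum_congr rfl fun i _ => hterm i]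
  have h1 := Finset.sum_range_succ (fun i => x ^ 4 ^ i) (m + 1)
  have h2 := Finset.sum_range_succ' (fun i => x ^ 4 ^ i) (m + 1)
  rw [h1] at h2
  simp only [pow_zero, pow_one, hcard x] at h2
  exact add_right_cancel h2.symm

private lemma trE_shiftk (hcard : ∀ x : E, x ^ 4 ^ (m + 1) = x) (x : E) (k : ℕ) :
    trE m (x ^ 4 ^ k) = trE m x := by
  induction k with
  | zero => simp
  | succ k ih =>
    have : x ^ 4 ^ (k + 1) = (x ^ 4 ^ k) ^ 4 := by rw [← pow_mul, pow_succ]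
    rw [this, trE_shift hcard, ih]

private lemma trE_pow4 [CharP E 2] (hcard : ∀ x : E, x ^ 4 ^ (m + 1) = x) (x : E) :
    trE m x ^ 4 = trE m x := by
  have h1 : trE m x ^ 4 = (trE m x ^ 2) ^ 2 := by ring
  rw [h1, ← trE_sq, ← trE_sq]
  have h2 : (x ^ 2) ^ 2 = x ^ 4 := by ring
  rw [h2, trE_shift hcard]

private lemma trE_const [CharP E 2] (hodd : Odd (m + 1)) {c : E} (hc : c ^ 4 = c) :
    trE m c = c := by
  unfold trE
  rw [Finset.sum_congr rfl fun i _ => aux_pow4 hc i, Finset.sum_const, Finset.card_range,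
    nsmul_eq_mul]
  obtain ⟨j, hj⟩ := hodd
  have h2E : (2 : E) = 0 := CharTwo.two_eq_zero
  have : ((m + 1 : ℕ) : E) = 1 := by
    rw [hj]; push_cast; linear_combination (j : E) * h2E
  rw [this, one_mul]

end trE

set_option maxHeartbeats 1000000 in
set_option synthInstance.maxHeartbeats 400000 in
theorem stmt15 (e : ℕ) (he : 1 < e)
    (E : Type*) [Field E] [Fintype E] (hE : Fintype.card E = 4 ^ e)
    (F4 : Subfield E) [Fintype F4] (hF4 : Fintype.card F4 = 4)
    (n : ℕ) (hn : n = 1 + 2 * 4 + 2 * 4 ^ (e - 1) + 2 * 4 ^ (e + 1))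
    (g : Polynomial E)
    (hg : ∑ c : F4, (X + C (c : E)) ^ n = g.comp (X ^ 4 - X))
    (S : ℕ → Polynomial E) (hS : ∀ d, S d = ∑ i ∈ Finset.range d, X ^ 4 ^ i) :
    (X ^ 4 ^ e - X) ∣ g - (S 2 + X ^ 2 * S e ^ 2 + S (e - 1) ^ 2 * S e ^ 2) ∧
    (Odd e → Function.Bijective fun x : E => g.eval x) := by
  obtain ⟨m, rfl⟩ : ∃ m, e = m + 1 := ⟨e - 1, by omega⟩
  simp only [Nat.add_sub_cancel] at *
  haveI hch : CharP E 2 := aux_char2 hE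
  haveI hchP : CharP (Polynomial E) 2 := inferInstance
  have h2P : (2 : Polynomial E) = 0 := CharTwo.two_eq_zero
  have h2E : (2 : E) = 0 := CharTwo.two_eq_zero
  -- coercion of elements of F4 satisfies a^4 = a
  have hc4 : ∀ c : F4, (c : E) ^ 4 = (c : E) := by
    intro c
    have h := FiniteField.pow_card c
    rw [hF4] at h
    exact_mod_cast congrArg (fun x : F4 => (x : E)) h
  -- sums over F4 inside E
  have hs1 : ∑ c : F4, (c : E) = 0 := by
    have h := congrArg (fun x : F4 => (x : E)) (aux_sum1 hF4)
    rw [AddSubmonoidClass.coe_finset_sum] at h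
    simpa using h
  have hs2 : ∑ c : F4, (c : E) ^ 2 = 0 := by
    have h := congrArg (fun x : F4 => (x : E)) (aux_sum2 hF4)
    rw [AddSubmonoidClass.coe_finset_sum] at h
    simp only [SubmonoidClass.coe_pow] at h
    simpa using h
  have hs3 : ∑ c : F4, (c : E) ^ 3 = 1 := by
    have h := congrArg (fun x : F4 => (x : E)) (aux_sum3 hF4)
    rw [AddSubmonoidClass.coe_finset_sum] at h
    simp only [SubmonoidClass.coe_pow] at h
    push_cast at h
    rw [h]; linear_combination h2E
  -- the sum ∑_c (X + c)^n
  have hsum : ∑ c : F4, (X + C (c : E)) ^ n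
      = X + X ^ (2*4^m + 2*4^(m+2)) + X ^ (2*4 + 2*4^(m+2)) + X ^ (2*4 + 2*4^m) := by
    have key : ∀ c : F4, (X + C (c : E)) ^ n =
        (C (c : E))^3 * (X + X^(2*4^m + 2*4^(m+2)) + X^(2*4 + 2*4^(m+2)) + X^(2*4 + 2*4^m))
        + (C (c : E))^2 * (X^(1 + 2*4^m + 2*4^(m+2)) + X^(9 + 2*4^(m+2)) + X^(9 + 2*4^m)
            + X^8 + X^(2*4^m) + X^(2*4^(m+2)))
        + (C (c : E)) * (X^(8 + 2*4^m + 2*4^(m+2)) + X^9 + X^(1 + 2*4^m) + X^(1 + 2*4^(m+2)) + 1)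
        + X^(9 + 2*4^m + 2*4^(m+2)) := by
      intro c
      have ha4 : ((c : E)) ^ 4 = (c : E) := hc4 c
      have hCa4 : (C ((c : E)) : Polynomial E) ^ 4 = C ((c : E)) := by
        rw [← map_pow, ha4]
      have hfrob : ∀ k : ℕ, ((X : Polynomial E) + C (c : E)) ^ 4 ^ k = X ^ 4 ^ k + C (c : E) := by
        intro k
        have h4k : (4 : ℕ) ^ k = 2 ^ (2 * k) := by rw [pow_mul]; norm_num
        rw [h4k, add_pow_char_pow, ← map_pow, ← h4k, aux_pow4 ha4]
      have h4 : ((X : Polynomial E) + C (c : E)) ^ 4 = X ^ 4 + C (c : E) := by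
        have := hfrob 1; norm_num at this; exact this
      have h8 : ((X : Polynomial E) + C (c : E)) ^ 8 = X ^ 8 + (C (c : E)) ^ 2 := by
        rw [show (8 : ℕ) = 4 * 2 by norm_num, pow_mul, h4, CharTwo.add_sq]; ring
      have hA : ((X : Polynomial E) + C (c : E)) ^ (2 * 4 ^ m)
          = X ^ (2 * 4 ^ m) + (C (c : E)) ^ 2 := by
        have hsplit : ((X : Polynomial E) + C (c : E)) ^ (2 * 4 ^ m)
            = (((X : Polynomial E) + C (c : E)) ^ 4 ^ m) ^ 2 := by
          rw [← pow_mul]; congr 1; ring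
        rw [hsplit, hfrob m, CharTwo.add_sq]; ring
      have hB : ((X : Polynomial E) + C (c : E)) ^ (2 * 4 ^ (m + 2))
          = X ^ (2 * 4 ^ (m + 2)) + (C (c : E)) ^ 2 := by
        have hsplit : ((X : Polynomial E) + C (c : E)) ^ (2 * 4 ^ (m + 2))
            = (((X : Polynomial E) + C (c : E)) ^ 4 ^ (m + 2)) ^ 2 := by
          rw [← pow_mul]; congr 1; ring
        rw [hsplit, hfrob (m + 2), CharTwo.add_sq]; ring
      have hn' : n = 1 + 8 + 2 * 4 ^ m + 2 * 4 ^ (m + 2) := by rw [hn]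
      rw [hn', pow_add, pow_add, pow_add, pow_one, h8, hA, hB]
      linear_combination (1 + (C (c:E))^3 + (C (c:E))*X^(2*4^(m+2)) + (C (c:E))*X^(2*4^m)
        + (C (c:E))^2*X + X*X^(2*4^(m+2)) + X*X^(2*4^m) + (C (c:E))*X^8 + X^9) * hCa4
    rw [Finset.sum_congr rfl fun c _ => key c]
    simp only [Finset.sum_add_distrib]
    rw [← Finset.sum_mul, ← Finset.sum_mul, ← Finset.sum_mul, Finset.sum_const,
      Finset.card_univ, hF4]
    have hm3 : ∑ c : F4, (C ((c : E)) : Polynomial E) ^ 3 = 1 := by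
      simp only [← map_pow]
      rw [← map_sum C (fun c : F4 => ((c : E)) ^ 3) Finset.univ, hs3, map_one]
    have hm2 : ∑ c : F4, (C ((c : E)) : Polynomial E) ^ 2 = 0 := by
      simp only [← map_pow]
      rw [← map_sum C (fun c : F4 => ((c : E)) ^ 2) Finset.univ, hs2, map_zero]
    have hm1 : ∑ c : F4, (C ((c : E)) : Polynomial E) = 0 := by
      rw [← map_sum C (fun c : F4 => ((c : E))) Finset.univ, hs1, map_zero]
    rw [hm3, hm2, hm1, one_mul, zero_mul, zero_mul, nsmul_eq_mul]
    push_cast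
    linear_combination (2 * X^(9 + 2*4^m + 2*4^(m+2))) * h2P
  -- composition of S d with X^4 - X
  have hScomp : ∀ d : ℕ, (S d).comp (X ^ 4 - X) = X ^ 4 ^ d - X := by
    intro d
    rw [hS]
    induction d with
    | zero => simp
    | succ d ih =>
      rw [Finset.sum_range_succ, add_comp, ih, pow_comp, X_comp]
      have h4d : (4:ℕ) ^ d = 2 ^ (2 * d) := by rw [pow_mul]; norm_num
      have key : ((X:Polynomial E) ^ 4 - X) ^ 4 ^ d = X ^ 4 ^ (d+1) - X ^ 4 ^ d := by
        have hfr : ((X:Polynomial E) ^ 4 + X) ^ 2 ^ (2*d)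
            = (X ^ 4) ^ 2 ^ (2*d) + X ^ 2 ^ (2*d) := add_pow_char_pow ..
        rw [CharTwo.sub_eq_add, CharTwo.sub_eq_add, h4d, hfr, ← pow_mul, ← h4d]
        congr 2
        ring
      rw [key]; ring
  -- g equals an explicit polynomial
  have hgG : g = X + (S 1 * S m + S m * S (m + 2) + S 1 * S (m + 2)) ^ 2 := by
    have hGcomp : ((X:Polynomial E) + (S 1 * S m + S m * S (m + 2) + S 1 * S (m + 2)) ^ 2).comp
        (X ^ 4 - X) = X + X ^ (2*4^m + 2*4^(m+2)) + X ^ (2*4 + 2*4^(m+2)) + X ^ (2*4 + 2*4^m) := by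
      simp only [add_comp, mul_comp, pow_comp, X_comp, hScomp]
      set u : Polynomial E := X ^ (4^m) with hu
      set v : Polynomial E := X ^ (4^(m+2)) with hv
      have huv : (X:Polynomial E) ^ (2*4^m + 2*4^(m+2)) = u^2 * v^2 := by rw [hu, hv]; ring
      have hv2 : (X:Polynomial E) ^ (2*4 + 2*4^(m+2)) = X^8 * v^2 := by rw [hv]; ring
      have hu2 : (X:Polynomial E) ^ (2*4 + 2*4^m) = X^8 * u^2 := by rw [hu]; ring
      rw [huv, hv2, hu2]
      have h41 : (4:ℕ)^1 = 4 := by norm_num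
      rw [h41]
      linear_combination (-X - 2*X*u*v^2 - 2*X*u^2*v + 2*X^2*v^2 + 7*X^2*u*v + 2*X^2*u^2
        - 6*X^3*v - 6*X^3*u + 5*X^4 + X^4*u*v^2 + X^4*u^2*v - 2*X^5*v^2 - 6*X^5*u*v
        - 2*X^5*u^2 + 7*X^6*v + 7*X^6*u - 6*X^7 + X^8*u*v - 2*X^9*v - 2*X^9*u + 2*X^10) * h2P
    have hcompeq : (g - (X + (S 1 * S m + S m * S (m + 2) + S 1 * S (m + 2)) ^ 2)).comp
        (X ^ 4 - X) = 0 := by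
      rw [sub_comp, ← hg, hsum, hGcomp, sub_self]
    rcases comp_eq_zero_iff.mp hcompeq with h | ⟨-, habs⟩
    · exact sub_eq_zero.mp h
    · exfalso
      have hdeg : ((X:Polynomial E) ^ 4 - X).natDegree = 4 := by
        compute_degree!
      rw [habs, natDegree_C] at hdeg
      exact absurd hdeg (by norm_num)
  -- basic facts about S
  have hS2 : S 2 = X + X ^ 4 := by
    rw [hS]
    rw [Finset.sum_range_succ, Finset.sum_range_one]
    norm_num
  have hS1 : S 1 = X := by
    rw [hS, Finset.sum_range_one]
    norm_num
  have hSsucc : S (m + 2) = S (m + 1) + X ^ 4 ^ (m + 1) := by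
    rw [hS, hS, Finset.sum_range_succ]
  -- the divisibility
  have hdvd : (X ^ 4 ^ (m+1) - X) ∣
      g - (S 2 + X ^ 2 * S (m+1) ^ 2 + S m ^ 2 * S (m+1) ^ 2) := by
    refine ⟨(X ^ 4 ^ (m+1) - X) * (S m + X) ^ 2, ?_⟩
    rw [hgG, hS2, hS1, hSsucc]
    linear_combination ((S m)^2*(S (m+1))*X^(4^(m+1)) + 2*X*(S m)*(S (m+1))*X^(4^(m+1))
      + X*(S m)*(S (m+1))^2 + 2*X*(S m)^2*X^(4^(m+1)) + X*(S m)^2*(S (m+1))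
      + X^2*(S (m+1))*X^(4^(m+1)) + 3*X^2*(S m)*X^(4^(m+1)) + X^2*(S m)*(S (m+1))
      + X^3*X^(4^(m+1)) - X^3*(S m) - X^4) * h2P
  refine ⟨hdvd, fun hodd => ?_⟩
  -- Part 2: bijectivity
  have hpowcard : ∀ x : E, x ^ 4 ^ (m+1) = x := by
    intro x; have := FiniteField.pow_card x; rwa [hE] at this
  have hgh : ∀ x : E, g.eval x
      = (S 2 + X ^ 2 * S (m+1) ^ 2 + S m ^ 2 * S (m+1) ^ 2).eval x := by
    intro x
    obtain ⟨k, hk⟩ := hdvd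
    have h := congrArg (eval x) hk
    rw [eval_sub, eval_mul, eval_sub, eval_pow, eval_X, hpowcard x, sub_self, zero_mul] at h
    exact sub_eq_zero.mp h
  have hSeval : ∀ (d : ℕ) (x : E), (S d).eval x = ∑ i ∈ Finset.range d, x ^ 4 ^ i := by
    intro d x
    rw [hS]
    rw [eval_finset_sum]
    refine Finset.sum_congr rfl fun i _ => ?_
    rw [eval_pow, eval_X]
  have hSm1 : ∀ x : E, (S (m+1)).eval x = trE m x := fun x => hSeval (m+1) x
  have hSmm : ∀ x : E, (S m).eval x = trE m x - x ^ 4 ^ m := by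
    intro x
    rw [hSeval]
    have : trE m x = (∑ i ∈ Finset.range m, x ^ 4 ^ i) + x ^ 4 ^ m := by
      unfold trE; rw [Finset.sum_range_succ]
    rw [this]; ring
  -- explicit value of g
  have hfx : ∀ x : E, g.eval x
      = x + x^4 + (trE m x)^2 * x^2 + (trE m x)^2 * x^(2*4^m) + trE m x := by
    intro x
    rw [hgh x]
    rw [eval_add, eval_add, eval_mul, eval_mul, eval_pow, eval_pow, eval_pow, eval_X,
      hSm1, hSmm, hS2]
    rw [eval_add, eval_pow, eval_X]
    have hxx : (x ^ 4 ^ m) ^ 2 = x ^ (2*4^m) := by rw [← pow_mul]; congr 1; ring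
    linear_combination (trE_pow4 hpowcard x) - ((trE m x)^3 * x^(4^m)) * h2E
      + (trE m x)^2 * hxx
  -- injectivity
  have hinj : Function.Injective fun x : E => g.eval x := by
    intro x y hxy
    simp only at hxy
    rw [hfx x, hfx y] at hxy
    -- the trace is preserved
    have htF : ∀ x : E, trE m (x + x^4 + (trE m x)^2 * x^2 + (trE m x)^2 * x^(2*4^m) + trE m x)
        = trE m x := by
      intro x
      rw [trE_add, trE_add, trE_add, trE_add, trE_shift hpowcard]
      have e3 : trE m ((trE m x)^2 * x^2) = trE m x := by
        have h : (trE m x)^2 * x^2 = (trE m x * x)^2 := by ring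
        rw [h, trE_sq, trE_mul (trE_pow4 hpowcard x)]
        have h2 : (trE m x * trE m x)^2 = (trE m x)^4 := by ring
        rw [h2, trE_pow4 hpowcard]
      have e4 : trE m ((trE m x)^2 * x^(2*4^m)) = trE m x := by
        have h : (trE m x)^2 * x^(2*4^m) = (trE m x * x^(4^m))^2 := by
          rw [mul_pow, ← pow_mul]; congr 2; ring
        rw [h, trE_sq, trE_mul (trE_pow4 hpowcard x), trE_shiftk hpowcard]
        have h2 : (trE m x * trE m x)^2 = (trE m x)^4 := by ring
        rw [h2, trE_pow4 hpowcard]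
      have e5 : trE m (trE m x) = trE m x := trE_const hodd (trE_pow4 hpowcard x)
      rw [e3, e4, e5]
      linear_combination (2 * trE m x) * h2E
    have htxy : trE m x = trE m y := by
      have h1 := htF x
      rw [hxy] at h1
      exact (h1.symm.trans (htF y))
    rw [← htxy] at hxy
    set z := x - y with hz
    have hsub2 : x^2 - y^2 = z^2 := by
      rw [hz]; exact (sub_pow_char x y (p := 2)).symm
    have hsub4 : x^4 - y^4 = z^4 := by
      have h := sub_pow_char_pow x y 2 (p := 2)
      norm_num at h
      rw [hz]; exact h.symm
    have hsubm : x^(2*4^m) - y^(2*4^m) = z^(2*4^m) := by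
      have hexp : 2*4^m = 2^(2*m+1) := by rw [pow_succ', pow_mul]; norm_num
      have h := sub_pow_char_pow x y (2*m+1) (p := 2)
      rw [hz, hexp]; exact h.symm
    have hL : z + z^4 + (trE m x)^2 * z^2 + (trE m x)^2 * z^(2*4^m) = 0 := by
      rw [← hsub2, ← hsub4, ← hsubm, hz]
      linear_combination hxy
    have hzc : z^(2*4^m) * z^(2*4^m) = z := by
      rw [← pow_add]
      have : 2*4^m + 2*4^m = 4^(m+1) := by rw [pow_succ]; ring
      rw [this, hpowcard]
    have hL2 : z^2 + z^8 + (trE m x) * z^4 + (trE m x) * z = 0 := by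
      linear_combination (z + z^4 + (trE m x)^2*z^2 + (trE m x)^2*z^(2*4^m)) * hL
        - (z^4 + z) * (trE_pow4 hpowcard x) - (trE m x)^4 * hzc
        - (z^5 + (trE m x)^2*z^3 + (trE m x)^2*z*z^(2*4^m) + (trE m x)^2*z^6
            + (trE m x)^2*z^4*z^(2*4^m) + (trE m x)^4*z^2*z^(2*4^m)) * h2E
    have htz : trE m z = 0 := by
      rw [hz, CharTwo.sub_eq_add, trE_add, htxy, CharTwo.add_self_eq_zero]
    have huz : z^4 + z = 0 := by
      have hfac : (z^4 + z) * ((z^4 + z) + trE m x) = 0 := by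
        linear_combination hL2 + z^5 * h2E
      rcases mul_eq_zero.mp hfac with h | h
      · exact h
      · have h' : z^4 + z = trE m x := by linear_combination h - (trE m x) * h2E
        have h0 : trE m x = 0 := by
          have hh := congrArg (trE m) h'
          rw [trE_add, trE_shift hpowcard, trE_const hodd (trE_pow4 hpowcard x)] at hh
          rw [htz] at hh
          rw [← hh, CharTwo.add_self_eq_zero]
        rw [h', h0]
    have hz4 : z^4 = z := by linear_combination huz - z * h2E
    have hzz : z = 0 := by
      have := trE_const hodd hz4
      rw [htz] at this
      exact this.symm
    have := sub_eq_zero.mp (hz ▸ hzz : x - y = 0)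
    exact this
  exact Finite.injective_iff_bijective.mp hinj
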